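/- For all integers n ≥ 65, M(n, ⌈n^{1/2}⌉) < 1/2. -/

import Mathlib

open Real

/-- Rademacher's bound `M(n, N)` for the remainder in the
Hardy-Ramanujan-Rademacher formula. -/
noncomputable def radeM (n N : ℕ) : ℝ :=
  44 * π ^ 2 / (225 * Real.sqrt 3) * ((N : ℝ)) ^ (-(1 / 2 : ℝ)) +
    π * Real.sqrt 2 / 75 * ((N : ℝ) / ((n : ℝ) - 1)) ^ ((1 / 2 : ℝ)) *
      Real.sinh (π / (N : ℝ) * Real.sqrt (2 * (n : ℝ) / 3))

lemma sqrt_le_of_sq_le {x t : ℝ} (ht : 0 ≤ t) (h : x ≤ t ^ 2) : Real.sqrt x ≤ t := by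
  calc Real.sqrt x ≤ Real.sqrt (t ^ 2) := Real.sqrt_le_sqrt h
    _ = t := Real.sqrt_sq ht

lemma le_sqrt_of_sq_le {s x : ℝ} (hs : 0 ≤ s) (h : s ^ 2 ≤ x) : s ≤ Real.sqrt x := by
  calc s = Real.sqrt (s ^ 2) := (Real.sqrt_sq hs).symm
    _ ≤ Real.sqrt x := Real.sqrt_le_sqrt h

lemma sinh_le_of_exp_le {x B : ℝ} (hB : Real.exp x ≤ B) :
    Real.sinh x ≤ (B - 1/B)/2 := by
  have h1 : 0 < Real.exp x := Real.exp_pos x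
  have hB0 : 0 < B := lt_of_lt_of_le h1 hB
  have h2 : 1/B ≤ Real.exp (-x) := by
    rw [Real.exp_neg]
    calc 1/B ≤ 1/Real.exp x := one_div_le_one_div_of_le h1 hB
      _ = (Real.exp x)⁻¹ := one_div _
  rw [Real.sinh_eq]
  linarith

lemma master (n N : ℕ) (s t a B : ℝ)
    (hn1 : (1:ℝ) < (n:ℝ))
    (hs0 : 0 < s) (hs : s ≤ Real.sqrt (N:ℝ))
    (ht : Real.sqrt ((N:ℝ)/((n:ℝ)-1)) ≤ t)
    (ha0 : 0 ≤ a) (ha : π / (N:ℝ) * Real.sqrt (2*(n:ℝ)/3) ≤ a)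
    (hB1 : 1 ≤ B) (hB : Real.exp a ≤ B)
    (hfin : 44*(3.141593:ℝ)^2/(225*1.7320508) * (1/s)
          + (3.141593:ℝ)*1.4142136/75 * (t * ((B-1/B)/2)) < 1/2) :
    radeM n N < 1/2 := by
  have hπ : π < 3.141593 := Real.pi_lt_d6
  have hπ0 : 0 < π := Real.pi_pos
  have h3 : (1.7320508:ℝ) ≤ Real.sqrt 3 := le_sqrt_of_sq_le (by norm_num) (by norm_num)
  have h2 : Real.sqrt 2 ≤ 1.4142136 := sqrt_le_of_sq_le (by norm_num) (by norm_num)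
  have hsq2 : (0:ℝ) ≤ Real.sqrt 2 := Real.sqrt_nonneg 2
  have hsN : 0 < Real.sqrt (N:ℝ) := lt_of_lt_of_le hs0 hs
  -- first factor bounds
  have hC1 : 44*π^2/(225*Real.sqrt 3) ≤ 44*(3.141593:ℝ)^2/(225*1.7320508) := by
    apply div_le_div₀ (by norm_num) (by nlinarith) (by norm_num) (by nlinarith)
  have hC10 : (0:ℝ) ≤ 44*π^2/(225*Real.sqrt 3) := by positivity
  have hX : ((N:ℝ)) ^ (-(1/2:ℝ)) = 1 / Real.sqrt (N:ℝ) := by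
    rw [Real.rpow_neg (Nat.cast_nonneg N), ← Real.sqrt_eq_rpow, one_div]
  have hX0 : (0:ℝ) ≤ ((N:ℝ)) ^ (-(1/2:ℝ)) := Real.rpow_nonneg (Nat.cast_nonneg N) _
  have hX' : ((N:ℝ)) ^ (-(1/2:ℝ)) ≤ 1/s := by
    rw [hX]
    exact one_div_le_one_div_of_le hs0 hs
  -- second factor bounds
  have hC2 : π*Real.sqrt 2/75 ≤ (3.141593:ℝ)*1.4142136/75 := by
    have : π*Real.sqrt 2 ≤ (3.141593:ℝ)*1.4142136 := by nlinarith
    linarith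
  have hC20 : (0:ℝ) ≤ π*Real.sqrt 2/75 := by positivity
  have hY0 : (0:ℝ) ≤ (N:ℝ)/((n:ℝ)-1) := by
    apply div_nonneg (Nat.cast_nonneg N); linarith
  have hYeq : ((N:ℝ)/((n:ℝ)-1)) ^ ((1/2:ℝ)) = Real.sqrt ((N:ℝ)/((n:ℝ)-1)) :=
    (Real.sqrt_eq_rpow _).symm
  have hYn : (0:ℝ) ≤ Real.sqrt ((N:ℝ)/((n:ℝ)-1)) := Real.sqrt_nonneg _
  have ht0 : (0:ℝ) ≤ t := le_trans hYn ht
  have hZ0 : (0:ℝ) ≤ Real.sinh (π / (N:ℝ) * Real.sqrt (2*(n:ℝ)/3)) :=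
    Real.sinh_nonneg_iff.mpr (by positivity)
  have hZ : Real.sinh (π / (N:ℝ) * Real.sqrt (2*(n:ℝ)/3)) ≤ (B-1/B)/2 :=
    (Real.sinh_le_sinh.mpr ha).trans (sinh_le_of_exp_le hB)
  unfold radeM
  rw [hYeq]
  have T1 : 44*π^2/(225*Real.sqrt 3) * ((N:ℝ)) ^ (-(1/2:ℝ))
      ≤ 44*(3.141593:ℝ)^2/(225*1.7320508) * (1/s) :=
    mul_le_mul hC1 hX' hX0 (by norm_num)
  have T2 : π*Real.sqrt 2/75 * Real.sqrt ((N:ℝ)/((n:ℝ)-1))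
        * Real.sinh (π / (N:ℝ) * Real.sqrt (2*(n:ℝ)/3))
      ≤ (3.141593:ℝ)*1.4142136/75 * (t * ((B-1/B)/2)) := by
    rw [mul_assoc]
    exact mul_le_mul hC2 (mul_le_mul ht hZ hZ0 ht0) (mul_nonneg hYn hZ0) (by norm_num)
  linarith

lemma exp_le_pow16 {x q r : ℝ} (hx : x ≤ q) (hq0 : 0 ≤ q) (hq1 : q ≤ 16)
    (hr : 1 + q/16 + (q/16)^2/2 + (q/16)^3/6 + (q/16)^4/24 + (q/16)^5/100 ≤ r) :
    Real.exp x ≤ r ^ 16 := by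
  have h0 : (0:ℝ) ≤ q/16 := by linarith
  have h1 : q/16 ≤ 1 := by linarith
  have hb := Real.exp_bound' h0 h1 (n := 5) (by norm_num)
  have hsum : Real.exp (q/16) ≤ r := by
    refine le_trans hb ?_
    rw [Finset.sum_range_succ, Finset.sum_range_succ, Finset.sum_range_succ,
      Finset.sum_range_succ, Finset.sum_range_succ, Finset.sum_range_zero]
    norm_num [Nat.factorial]
    nlinarith [hr]
  have hq16 : Real.exp q = Real.exp (q/16) ^ 16 := by
    rw [← Real.exp_nat_mul]
    push_cast
    ring_nf
  calc Real.exp x ≤ Real.exp q := Real.exp_le_exp.mpr hx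
    _ = Real.exp (q/16) ^ 16 := hq16
    _ ≤ r ^ 16 := pow_le_pow_left₀ (Real.exp_pos _).le hsum 16



lemma case9 (n : ℕ) (t u a r : ℝ)
    (hn1 : (1:ℝ) < (n:ℝ))
    (ht0 : 0 ≤ t) (ht2 : (9:ℝ)/((n:ℝ)-1) ≤ t^2)
    (hu0 : 0 ≤ u) (hu2 : 2*(n:ℝ)/3 ≤ u^2)
    (ha : (3.141593:ℝ) * u / 9 ≤ a) (ha0 : 0 ≤ a) (ha16 : a ≤ 16)
    (hr : 1 + a/16 + (a/16)^2/2 + (a/16)^3/6 + (a/16)^4/24 + (a/16)^5/100 ≤ r)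
    (hr1 : 1 ≤ r)
    (hfin : 44*(3.141593:ℝ)^2/(225*1.7320508) * (1/3)
          + (3.141593:ℝ)*1.4142136/75 * (t * ((r^16-1/r^16)/2)) < 1/2) :
    radeM n 9 < 1/2 := by
  have h9 : ((9:ℕ):ℝ) = 9 := by norm_num
  apply master n 9 3 t a (r^16) hn1 (by norm_num) ?_ ?_ ha0 ?_ ?_ ?_ hfin
  · rw [h9]; exact le_sqrt_of_sq_le (by norm_num) (by norm_num)
  · rw [h9]; exact sqrt_le_of_sq_le ht0 ht2
  · rw [h9]
    have hsq : Real.sqrt (2*(n:ℝ)/3) ≤ u := sqrt_le_of_sq_le hu0 hu2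
    have hπ : π < 3.141593 := Real.pi_lt_d6
    calc π/9 * Real.sqrt (2*(n:ℝ)/3) ≤ 3.141593/9*u :=
          mul_le_mul (by linarith) hsq (Real.sqrt_nonneg _) (by norm_num)
      _ = 3.141593*u/9 := by ring
      _ ≤ a := ha
  · calc (1:ℝ) = 1^16 := by norm_num
      _ ≤ r^16 := pow_le_pow_left₀ (by norm_num) hr1 16
  · exact exp_le_pow16 le_rfl ha0 ha16 hr

theorem radeM_lt_half (n : ℕ) (hn : 65 ≤ n) : radeM n ⌈Real.sqrt n⌉₊ < 1 / 2 := by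
  have hn65 : (65:ℝ) ≤ (n:ℝ) := by exact_mod_cast hn
  rcases le_or_gt n 81 with h81 | h81
  · -- 65 ≤ n ≤ 81 : N = 9
    have h81' : ((n:ℝ)) ≤ 81 := by exact_mod_cast h81
    have hceil : ⌈Real.sqrt (n:ℝ)⌉₊ = 9 := by
      rw [Nat.ceil_eq_iff (by norm_num)]
      constructor
      · push_cast
        calc ((8:ℝ)) < 8.062 := by norm_num
          _ ≤ Real.sqrt (n:ℝ) := le_sqrt_of_sq_le (by norm_num) (by nlinarith)
      · push_cast
        exact sqrt_le_of_sq_le (by norm_num) (by nlinarith)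
    rw [hceil]
    interval_cases n
    · exact case9 65 (3/8 : ℝ) (65828059/10000000 : ℝ) (2297833/1000000 : ℝ) (1154439149/1000000000 : ℝ) (by norm_num) (by norm_num)
        (by norm_num) (by norm_num) (by norm_num) (by norm_num) (by norm_num)
        (by norm_num) (by norm_num) (by norm_num) (by norm_num)
    · exact case9 66 (3721043/10000000 : ℝ) (4145781/625000 : ℝ) (5788603/2500000 : ℝ) (577855163/500000000 : ℝ) (by norm_num) (by norm_num)
        (by norm_num) (by norm_num) (by norm_num) (by norm_num) (by norm_num)
        (by norm_num) (by norm_num) (by norm_num) (by norm_num)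
    · exact case9 67 (738549/2000000 : ℝ) (33416563/5000000 : ℝ) (4665833/2000000 : ℝ) (1156973293/1000000000 : ℝ) (by norm_num) (by norm_num)
        (by norm_num) (by norm_num) (by norm_num) (by norm_num) (by norm_num)
        (by norm_num) (by norm_num) (by norm_num) (by norm_num)
    · exact case9 68 (916271/2500000 : ℝ) (67330033/10000000 : ℝ) (11751309/5000000 : ℝ) (1158228229/1000000000 : ℝ) (by norm_num) (by norm_num)
        (by norm_num) (by norm_num) (by norm_num) (by norm_num) (by norm_num)
        (by norm_num) (by norm_num) (by norm_num) (by norm_num)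
    · exact case9 69 (727607/2000000 : ℝ) (678233/100000 : ℝ) (23674801/10000000 : ℝ) (289868831/250000000 : ℝ) (by norm_num) (by norm_num)
        (by norm_num) (by norm_num) (by norm_num) (by norm_num) (by norm_num)
        (by norm_num) (by norm_num) (by norm_num) (by norm_num)
    · exact case9 70 (451447/1250000 : ℝ) (34156503/5000000 : ℝ) (23845741/10000000 : ℝ) (145089343/125000000 : ℝ) (by norm_num) (by norm_num)
        (by norm_num) (by norm_num) (by norm_num) (by norm_num) (by norm_num)
        (by norm_num) (by norm_num) (by norm_num) (by norm_num)
    · exact case9 71 (1792843/5000000 : ℝ) (2751969/400000 : ℝ) (24015463/10000000 : ℝ) (1161946643/1000000000 : ℝ) (by norm_num) (by norm_num)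
        (by norm_num) (by norm_num) (by norm_num) (by norm_num) (by norm_num)
        (by norm_num) (by norm_num) (by norm_num) (by norm_num)
    · exact case9 72 (712069/2000000 : ℝ) (69282033/10000000 : ℝ) (4836799/2000000 : ℝ) (1163171199/1000000000 : ℝ) (by norm_num) (by norm_num)
        (by norm_num) (by norm_num) (by norm_num) (by norm_num) (by norm_num)
        (by norm_num) (by norm_num) (by norm_num) (by norm_num)
    · exact case9 73 (1767767/5000000 : ℝ) (69761499/10000000 : ℝ) (38049/15625 : ℝ) (1164388553/1000000000 : ℝ) (by norm_num) (by norm_num)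
        (by norm_num) (by norm_num) (by norm_num) (by norm_num) (by norm_num)
        (by norm_num) (by norm_num) (by norm_num) (by norm_num)
    · exact case9 74 (702247/2000000 : ℝ) (17559423/2500000 : ℝ) (24517583/10000000 : ℝ) (582799431/500000000 : ℝ) (by norm_num) (by norm_num)
        (by norm_num) (by norm_num) (by norm_num) (by norm_num) (by norm_num)
        (by norm_num) (by norm_num) (by norm_num) (by norm_num)
    · exact case9 75 (348743/1000000 : ℝ) (70710679/10000000 : ℝ) (24682687/10000000 : ℝ) (291700567/250000000 : ℝ) (by norm_num) (by norm_num)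
        (by norm_num) (by norm_num) (by norm_num) (by norm_num) (by norm_num)
        (by norm_num) (by norm_num) (by norm_num) (by norm_num)
    · exact case9 76 (1732051/5000000 : ℝ) (35590261/5000000 : ℝ) (24846693/10000000 : ℝ) (1167998901/1000000000 : ℝ) (by norm_num) (by norm_num)
        (by norm_num) (by norm_num) (by norm_num) (by norm_num) (by norm_num)
        (by norm_num) (by norm_num) (by norm_num) (by norm_num)
    · exact case9 77 (3441237/10000000 : ℝ) (14329457/2000000 : ℝ) (3126203/1250000 : ℝ) (584594453/500000000 : ℝ) (by norm_num) (by norm_num)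
        (by norm_num) (by norm_num) (by norm_num) (by norm_num) (by norm_num)
        (by norm_num) (by norm_num) (by norm_num) (by norm_num)
    · exact case9 78 (1709409/5000000 : ℝ) (36055513/5000000 : ℝ) (50343/20000 : ℝ) (585186203/500000000 : ℝ) (by norm_num) (by norm_num)
        (by norm_num) (by norm_num) (by norm_num) (by norm_num) (by norm_num)
        (by norm_num) (by norm_num) (by norm_num) (by norm_num)
    · exact case9 79 (106151/312500 : ℝ) (18142951/2500000 : ℝ) (12666171/5000000 : ℝ) (585774767/500000000 : ℝ) (by norm_num) (by norm_num)
        (by norm_num) (by norm_num) (by norm_num) (by norm_num) (by norm_num)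
        (by norm_num) (by norm_num) (by norm_num) (by norm_num)
    · exact case9 80 (105477/312500 : ℝ) (2921187/400000 : ℝ) (25492169/10000000 : ℝ) (234544081/200000000 : ℝ) (by norm_num) (by norm_num)
        (by norm_num) (by norm_num) (by norm_num) (by norm_num) (by norm_num)
        (by norm_num) (by norm_num) (by norm_num) (by norm_num)
    · exact case9 81 (1677051/5000000 : ℝ) (73484693/10000000 : ℝ) (25651/10000 : ℝ) (58694257/50000000 : ℝ) (by norm_num) (by norm_num)
        (by norm_num) (by norm_num) (by norm_num) (by norm_num) (by norm_num)
        (by norm_num) (by norm_num) (by norm_num) (by norm_num)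
  · -- n ≥ 82
    have h82 : (82:ℝ) ≤ (n:ℝ) := by exact_mod_cast h81
    set N := ⌈Real.sqrt (n:ℝ)⌉₊ with hN
    have hsn : Real.sqrt (n:ℝ) ≤ (N:ℝ) := Nat.le_ceil _
    have hNlt : (N:ℝ) < Real.sqrt (n:ℝ) + 1 := Nat.ceil_lt_add_one (Real.sqrt_nonneg _)
    have hsq : Real.sqrt (n:ℝ) ^ 2 = (n:ℝ) := Real.sq_sqrt (by positivity)
    have h9 : (9.0553:ℝ) ≤ Real.sqrt (n:ℝ) := le_sqrt_of_sq_le (by norm_num) (by nlinarith)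
    have hN10 : (10:ℕ) ≤ N := Nat.lt_ceil.mpr (by push_cast; linarith)
    have hN10' : (10:ℝ) ≤ (N:ℝ) := by exact_mod_cast hN10
    have hNpos : (0:ℝ) < (N:ℝ) := by linarith
    have hn1' : (0:ℝ) < (n:ℝ) - 1 := by linarith
    apply master n N (31622776/10000000) (35257/100000) (25651064/10000000)
        ((117388561/100000000 : ℝ)^16) (by linarith) (by norm_num) ?_ ?_ (by norm_num) ?_ ?_ ?_ ?_
    · exact le_sqrt_of_sq_le (by norm_num) (by norm_num; linarith)
    · apply sqrt_le_of_sq_le (by norm_num)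
      have key : (N:ℝ) ≤ (1243/10000) * ((n:ℝ)-1) := by
        nlinarith [sq_nonneg (Real.sqrt (n:ℝ) - 9.0553)]
      calc (N:ℝ)/((n:ℝ)-1) ≤ 1243/10000 := by
            rw [div_le_iff₀ hn1']; linarith
        _ ≤ (35257/100000:ℝ)^2 := by norm_num
    · have hnN : (n:ℝ) ≤ (N:ℝ)^2 := by nlinarith [Real.sqrt_nonneg (n:ℝ)]
      have hsq2 : Real.sqrt (2*(n:ℝ)/3) ≤ (8164966/10000000) * (N:ℝ) :=
        sqrt_le_of_sq_le (by positivity) (by nlinarith)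
      have hπ : π < 3.141593 := Real.pi_lt_d6
      have step : π / (N:ℝ) * Real.sqrt (2*(n:ℝ)/3)
          ≤ π / (N:ℝ) * ((8164966/10000000) * (N:ℝ)) :=
        mul_le_mul_of_nonneg_left hsq2 (by positivity)
      have heq : π / (N:ℝ) * ((8164966/10000000) * (N:ℝ)) = (8164966/10000000) * π := by
        field_simp
      calc π / (N:ℝ) * Real.sqrt (2*(n:ℝ)/3) ≤ (8164966/10000000) * π := by
            rw [← heq]; exact step
        _ ≤ (25651064/10000000 : ℝ) := by nlinarith
    · calc (1:ℝ) = 1^16 := by norm_num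
        _ ≤ (117388561/100000000 : ℝ)^16 := pow_le_pow_left₀ (by norm_num) (by norm_num) 16
    · exact exp_le_pow16 le_rfl (by norm_num) (by norm_num) (by norm_num)
    · norm_num
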